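/- The area of the cusp triangle T' = P₁'P₂'P₃' is invariant over M and equals 27√3·c⁴/(16ab): with P_i' = (x_i', y_i'), one has (1/2)·|x₁'(y₂' − y₃') + x₂'(y₃' − y₁') + x₃'(y₁' − y₂')| = 27√3·c⁴/(16ab) for every u. -/

import Mathlib

open Real

noncomputable def steinerHat (a b u t : ℝ) : ℝ × ℝ :=
  (((a ^ 2 - b ^ 2) * (1 + cos (t + u)) * cos t - a ^ 2 * cos u) / a,
   ((a ^ 2 - b ^ 2) * cos t * sin (t + u) - (a ^ 2 - b ^ 2) * sin t - a ^ 2 * sin u) / b)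

set_option maxRecDepth 10000 in
set_option maxHeartbeats 2000000 in
/-- the area of the cusp triangle `T' = P₁'P₂'P₃'` is invariant over `M`
and equals `27√3 c⁴/(16ab)`. -/
theorem stmt7 (a b u : ℝ) (hb : 0 < b) (hab : b < a)
    (P₁' P₂' P₃' : ℝ × ℝ)
    (hP₁' : P₁' = steinerHat a b u (-u / 3))
    (hP₂' : P₂' = steinerHat a b u (-u / 3 - 2 * π / 3))
    (hP₃' : P₃' = steinerHat a b u (-u / 3 - 4 * π / 3)) :
    (1 / 2) * |P₁'.1 * (P₂'.2 - P₃'.2) + P₂'.1 * (P₃'.2 - P₁'.2) + P₃'.1 * (P₁'.2 - P₂'.2)|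
      = 27 * Real.sqrt 3 * (a ^ 2 - b ^ 2) ^ 2 / (16 * a * b) := by
  have ha : (0:ℝ) < a := hb.trans hab
  have hcu : Real.cos u = 4 * Real.cos (u/3) ^ 3 - 3 * Real.cos (u/3) := by
    have h := Real.cos_three_mul (u/3)
    rw [show (3:ℝ) * (u/3) = u by ring] at h
    exact h
  have hsu : Real.sin u = 3 * Real.sin (u/3) - 4 * Real.sin (u/3) ^ 3 := by
    have h := Real.sin_three_mul (u/3)
    rw [show (3:ℝ) * (u/3) = u by ring] at h
    exact h
  have key : P₁'.1 * (P₂'.2 - P₃'.2) + P₂'.1 * (P₃'.2 - P₁'.2) + P₃'.1 * (P₁'.2 - P₂'.2)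
      = 27 * Real.sqrt 3 * (a ^ 2 - b ^ 2) ^ 2 / (8 * a * b) := by
    subst hP₁' hP₂' hP₃'
    simp only [steinerHat]
    rw [show (-u/3 + u : ℝ) = 2*(u/3) by ring,
        show (-u/3 - 2*π/3 + u : ℝ) = 2*(u/3) - 2*π/3 by ring,
        show (-u/3 - 4*π/3 + u : ℝ) = 2*(u/3) - 4*π/3 by ring,
        show (2*π/3 : ℝ) = π - π/3 by ring,
        show (4*π/3 : ℝ) = π - -(π/3) by ring]
    simp only [neg_div]
    simp only [Real.cos_sub, Real.sin_sub]
    simp only [Real.cos_pi_sub, Real.sin_pi_sub, Real.cos_neg, Real.sin_neg, Real.cos_pi, Real.sin_pi]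
    simp only [Real.cos_pi_div_three, Real.sin_pi_div_three]
    simp only [Real.cos_two_mul, Real.sin_two_mul]
    rw [hcu, hsu]
    set c := Real.cos (u/3) with hc
    set s := Real.sin (u/3) with hs
    set r := Real.sqrt 3 with hr
    have h1 : s^2 + c^2 = 1 := Real.sin_sq_add_cos_sq (u/3)
    have h2 : r^2 = 3 := Real.sq_sqrt (by norm_num)
    have ha' : a ≠ 0 := ne_of_gt ha
    have hb' : b ≠ 0 := ne_of_gt hb
    field_simp
    have hs2 : s^2 = 1 - c^2 := by linarith
    have hs4 : s^4 = (1 - c^2)^2 := by rw [← hs2]; ring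
    have hr3 : r^3 = 3 * r := by rw [← h2]; ring
    ring_nf
    simp only [hs2, hs4, hr3, h2]
    ring
  rw [key, abs_of_nonneg (by positivity)]
  ring
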